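/- Let g be a complex semisimple Lie algebra, q = ℂf + b with b a Borel subalgebra and f the opposite principal nilpotent, and q_- = ℂe + b_-. Then g = q ⊕ q_-^⊥, where q_-^⊥ is the Killing-form orthocomplement of q_-, and the restriction map S(q) → A(q_-) (polynomial functions on g restricted to the affine subspace q_-) is an algebra isomorphism. -/

import Mathlib

set_option linter.unusedSectionVars false
set_option maxHeartbeats 2000000

section

variable {g : Type*} [LieRing g] [LieAlgebra ℂ g] [Module.Finite ℂ g]
  [LieAlgebra.IsKilling ℂ g] [LieAlgebra.IsSemisimple ℂ g]

open LieModule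

private lemma kf_symm (x y : g) : killingForm ℂ g x y = killingForm ℂ g y x :=
  LieModule.traceForm_comm ℂ g g x y

private lemma orth_eigen {w x y : g} {a b : ℂ} (hx : ⁅w, x⁆ = a • x) (hy : ⁅w, y⁆ = b • y)
    (hab : a + b ≠ 0) : killingForm ℂ g x y = 0 := by
  have h1 : killingForm ℂ g ⁅w, x⁆ y = killingForm ℂ g w ⁅x, y⁆ :=
    LieModule.traceForm_apply_lie_apply ℂ g g w x y
  have h2 : killingForm ℂ g ⁅w, y⁆ x = killingForm ℂ g w ⁅y, x⁆ :=
    LieModule.traceForm_apply_lie_apply ℂ g g w y x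
  have e1 : a * killingForm ℂ g x y = killingForm ℂ g w ⁅x, y⁆ := by
    rw [← h1, hx, LinearMap.map_smul₂, smul_eq_mul]
  have e2 : b * killingForm ℂ g x y = - killingForm ℂ g w ⁅x, y⁆ := by
    rw [← neg_neg ⁅x, y⁆, lie_skew y x, map_neg, ← h2, hy, LinearMap.map_smul₂, smul_eq_mul,
      neg_neg, kf_symm]
  have : (a + b) * killingForm ℂ g x y = 0 := by rw [add_mul, e1, e2]; ring
  rcases mul_eq_zero.mp this with h | h
  · exact absurd h hab
  · exact h

private lemma eig_neg (T : Module.End ℂ g) (μ : ℂ) :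
    (-T).eigenspace μ = T.eigenspace (-μ) := by
  ext v
  simp only [Module.End.mem_eigenspace_iff, LinearMap.neg_apply, neg_smul]
  constructor
  · intro h; rw [← neg_neg (T v), h]
  · intro h; rw [h, neg_neg]

private lemma mk_triple {w e f : g} (hw : w ≠ 0)
    (hwe : ⁅w, e⁆ = (2 : ℂ) • e) (hwf : ⁅w, f⁆ = -(2 : ℂ) • f) (hef : ⁅e, f⁆ = w) :
    IsSl2Triple w e f where
  h_ne_zero := hw
  lie_e_f := hef
  lie_h_e_nsmul := by rw [hwe, two_smul, two_smul]
  lie_h_f_nsmul := by rw [hwf, neg_smul, two_smul, two_smul]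

private lemma eigenvalue_int {w e f : g} (hw : w ≠ 0)
    (hwe : ⁅w, e⁆ = (2 : ℂ) • e) (hwf : ⁅w, f⁆ = -(2 : ℂ) • f) (hef : ⁅e, f⁆ = w)
    {v : g} (hv : v ≠ 0) {lam : ℂ} (hlam : ⁅w, v⁆ = lam • v) :
    ∃ n : ℤ, lam = n := by
  have t : IsSl2Triple w e f := mk_triple hw hwe hwf hef
  set T : Module.End ℂ g := (LieAlgebra.ad ℂ g e : Module.End ℂ g) with hT
  have hTapp : ∀ z : g, T z = ⁅e, z⁆ := fun z => rfl
  have hstep : ∀ n : ℕ, ⁅w, (T ^ n) v⁆ = (lam + 2 * n) • (T ^ n) v := by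
    intro n; induction n with
    | zero => simpa using hlam
    | succ n ih =>
      have h1 : (T ^ (n + 1)) v = ⁅e, (T ^ n) v⁆ := by
        rw [pow_succ', Module.End.mul_apply, hTapp]
      rw [h1, leibniz_lie, hwe, ih, lie_smul, smul_lie]
      push_cast
      match_scalars <;> ring
  have hzero : ∃ n : ℕ, (T ^ n) v = 0 := by
    by_contra hcon
    push_neg at hcon
    have hs : (Set.range fun n : ℕ => lam + 2 * (n : ℂ)).Infinite := by
      rw [Set.infinite_range_iff (fun n m h => by
        have : (n : ℂ) = m := by
          simpa using h
        exact_mod_cast this)]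
      infer_instance
    refine hs ?_
    have := (LieAlgebra.ad ℂ g w : Module.End ℂ g).eigenvectors_linearIndependent
      {x : ℂ | ∃ n : ℕ, lam + 2 * (n : ℂ) = x}
      (fun s => (T ^ Classical.choose s.2) v)
      (fun s => by
        refine ⟨?_, hcon _⟩
        rw [Module.End.mem_eigenspace_iff, LieAlgebra.ad_apply, hstep, Classical.choose_spec s.2])
    have hset : (Set.range fun n : ℕ => lam + 2 * (n : ℂ)) =
        {x : ℂ | ∃ n : ℕ, lam + 2 * (n : ℂ) = x} := by
      ext x; simp [eq_comm]
    rw [hset]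
    exact this.finite
  obtain ⟨n, hn1, hn2⟩ :=
    Nat.exists_not_and_succ_of_not_zero_of_exists (p := fun n => (T ^ n) v = 0)
      (by simpa using hv) hzero
  have P : t.HasPrimitiveVectorWith ((T ^ n) v) (lam + 2 * n) :=
    { ne_zero := hn1
      lie_h := hstep n
      lie_e := by rw [← hTapp, ← Module.End.mul_apply, ← pow_succ']; exact hn2 }
  obtain ⟨m, hm⟩ := P.exists_nat
  refine ⟨(m : ℤ) - 2 * n, ?_⟩
  have : lam = (m : ℂ) - 2 * n := by linear_combination hm
  rw [this]; push_cast; ring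

private lemma kww {w e f : g} (hwf : ⁅w, f⁆ = -(2 : ℂ) • f) (hef : ⁅e, f⁆ = w) :
    killingForm ℂ g w w = 2 * killingForm ℂ g e f := by
  have h1 : killingForm ℂ g ⁅e, f⁆ w = killingForm ℂ g e ⁅f, w⁆ :=
    LieModule.traceForm_apply_lie_apply ℂ g g e f w
  have h2 : ⁅f, w⁆ = (2 : ℂ) • f := by
    rw [← neg_neg ⁅f, w⁆, lie_skew w f, hwf, neg_smul, neg_neg]
  rw [hef, h2, map_smul, smul_eq_mul] at h1
  exact h1

private lemma kef_ne_zero (H : LieSubalgebra ℂ g) [H.IsCartanSubalgebra]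
    {w e f : g} (hw : w ≠ 0)
    (hwe : ⁅w, e⁆ = (2 : ℂ) • e) (hwf : ⁅w, f⁆ = -(2 : ℂ) • f) (hef : ⁅e, f⁆ = w)
    (hwH : w ∈ H) :
    killingForm ℂ g e f ≠ 0 := by
  have hne : e ≠ 0 := fun h => hw (by rw [← hef, h, zero_lie])
  set w' : H := ⟨w, hwH⟩ with hw'
  have hres : killingForm ℂ g w w = LieModule.traceForm ℂ H g w' w' := rfl
  have key := LieModule.traceForm_eq_sum_finrank_nsmul_mul (K := ℂ) (L := H) (M := g) w' w'
  have hbr : ∀ (χ : Weight ℂ H g) (v : g), v ∈ genWeightSpace g (χ : H → ℂ) →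
      ⁅w, v⁆ = χ w' • v := by
    intro χ v hv
    exact LieAlgebra.IsKilling.lie_eq_smul_of_mem_rootSpace (α := (χ : H → ℂ)) hv w'
  have hint : ∀ χ : Weight ℂ H g, ∃ n : ℤ, χ w' = n := by
    intro χ
    obtain ⟨v, hv, hv0⟩ : ∃ v, v ∈ genWeightSpace g (χ : H → ℂ) ∧ v ≠ 0 := by
      have h := χ.genWeightSpace_ne_bot
      by_contra hc; push_neg at hc
      exact h (by rw [LieSubmodule.eq_bot_iff]; intro m hm; exact hc m hm)
    exact eigenvalue_int hw hwe hwf hef hv0 (hbr χ v hv)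
  choose nn hnn using hint
  have hcast : killingForm ℂ g w w =
      ((∑ χ : Weight ℂ H g,
        (Module.finrank ℂ (genWeightSpace g (χ : H → ℂ)) : ℤ) * nn χ ^ 2 : ℤ) : ℂ) := by
    rw [hres, key]; push_cast
    refine Finset.sum_congr rfl fun χ _ => ?_
    rw [hnn χ]; push_cast; ring
  have hex : ∃ χ : Weight ℂ H g, χ w' ≠ 0 := by
    by_contra hall; push_neg at hall
    have hzero : ∀ z : g, ⁅w, z⁆ = 0 := by
      intro z
      have hz : z ∈ (⨆ χ : Weight ℂ H g, genWeightSpace g (χ : H → ℂ)) := by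
        rw [iSup_genWeightSpace_eq_top' ℂ H g]; trivial
      induction hz using LieSubmodule.iSup_induction' with
      | mem χ z hz => rw [hbr χ z hz, hall, zero_smul]
      | zero => simp
      | add u v _ _ hu hv => rw [lie_add, hu, hv, add_zero]
    exact hne (by simpa [hzero e] using hwe.symm)
  obtain ⟨χ₀, hχ₀⟩ := hex
  have hpos : (0 : ℤ) < ∑ χ : Weight ℂ H g,
      (Module.finrank ℂ (genWeightSpace g (χ : H → ℂ)) : ℤ) * nn χ ^ 2 := by
    refine Finset.sum_pos' (fun χ _ => by positivity) ⟨χ₀, Finset.mem_univ _, ?_⟩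
    have hn0 : nn χ₀ ≠ 0 := by
      intro h; apply hχ₀; rw [hnn χ₀, h]; simp
    have hd : 0 < Module.finrank ℂ (genWeightSpace g (χ₀ : H → ℂ)) := by
      have : Nontrivial (genWeightSpace g (χ₀ : H → ℂ)) :=
        (LieSubmodule.nontrivial_iff_ne_bot ℂ H g).mpr χ₀.genWeightSpace_ne_bot
      exact Module.finrank_pos
    have h1 : (1 : ℤ) ≤ nn χ₀ ^ 2 := by
      have := sq_pos_of_ne_zero (a := nn χ₀) hn0
      omega
    nlinarith [Int.ofNat_lt.mpr hd]
  have hww : killingForm ℂ g w w ≠ 0 := by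
    rw [hcast]; exact_mod_cast hpos.ne'
  intro hc
  exact hww (by rw [kww hwf hef, hc, mul_zero])

private lemma aux_ker (H : LieSubalgebra ℂ g) [H.IsCartanSubalgebra]
    (w e f : g)
    (hwe : ⁅w, e⁆ = (2 : ℂ) • e) (hwf : ⁅w, f⁆ = -(2 : ℂ) • f) (hef : ⁅e, f⁆ = w)
    (hwH : w ∈ H)
    (hH0 : H.toSubmodule = (LieAlgebra.ad ℂ g w : Module.End ℂ g).eigenspace 0)
    {x : g}
    (hx : x ∈ Submodule.span ℂ {f} ⊔ H.toSubmodule ⊔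
      (⨆ k : ℕ, (LieAlgebra.ad ℂ g w : Module.End ℂ g).eigenspace (2 * ((k : ℂ) + 1))))
    (hortho : ∀ y ∈ Submodule.span ℂ {e} ⊔ H.toSubmodule ⊔
      (⨆ k : ℕ, (LieAlgebra.ad ℂ g w : Module.End ℂ g).eigenspace (-(2 * ((k : ℂ) + 1)))),
      killingForm ℂ g x y = 0) :
    x = 0 := by
  set T : Module.End ℂ g := (LieAlgebra.ad ℂ g w : Module.End ℂ g) with hT
  set Npos : Submodule ℂ g := ⨆ k : ℕ, T.eigenspace (2 * ((k : ℂ) + 1)) with hNpos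
  set Nneg : Submodule ℂ g := ⨆ k : ℕ, T.eigenspace (-(2 * ((k : ℂ) + 1))) with hNneg
  obtain ⟨u, hu, n, hn, rfl⟩ := Submodule.mem_sup.mp hx
  obtain ⟨f', hf', h, hh, rfl⟩ := Submodule.mem_sup.mp hu
  obtain ⟨c, rfl⟩ := Submodule.mem_span_singleton.mp hf'
  have hc1 : ∀ k : ℕ, 2 * ((k : ℂ) + 1) + 0 ≠ 0 := by
    intro k
    have : 2 * ((k : ℂ) + 1) + 0 = ((2 * k + 2 : ℕ) : ℂ) := by push_cast; ring
    rw [this]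
    exact Nat.cast_ne_zero.mpr (by omega)
  have hc2 : ∀ k : ℕ, 2 * ((k : ℂ) + 1) + 2 ≠ 0 := by
    intro k
    have : 2 * ((k : ℂ) + 1) + 2 = ((2 * k + 4 : ℕ) : ℂ) := by push_cast; ring
    rw [this]
    exact Nat.cast_ne_zero.mpr (by omega)
  have heigf : ⁅w, c • f⁆ = (-2 : ℂ) • (c • f) := by
    rw [lie_smul, hwf, smul_comm]
  have hHeig : ∀ z ∈ H, ⁅w, z⁆ = (0 : ℂ) • z := by
    intro z hz
    have hz' : z ∈ T.eigenspace 0 := by rw [← hH0]; exact hz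
    simpa [hT, LieAlgebra.ad_apply] using Module.End.mem_eigenspace_iff.mp hz'
  have hNorth : ∀ z ∈ Npos, ∀ (y : g) (μ : ℂ), ⁅w, y⁆ = μ • y →
      (∀ k : ℕ, 2 * ((k : ℂ) + 1) + μ ≠ 0) → killingForm ℂ g z y = 0 := by
    intro z hz y μ hy hne
    have hle : Npos ≤ LinearMap.ker ((killingForm ℂ g).flip y) := by
      refine iSup_le fun k v hv => ?_
      have hveig : ⁅w, v⁆ = (2 * ((k : ℂ) + 1)) • v := by
        simpa [hT, LieAlgebra.ad_apply] using Module.End.mem_eigenspace_iff.mp hv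
      simpa [LinearMap.mem_ker] using orth_eigen hveig hy (hne k)
    simpa using hle hz
  have hmemH : ∀ z ∈ H, z ∈ Submodule.span ℂ {e} ⊔ H.toSubmodule ⊔ Nneg := fun z hz =>
    Submodule.mem_sup_left (Submodule.mem_sup_right hz)
  have hmeme : e ∈ Submodule.span ℂ {e} ⊔ H.toSubmodule ⊔ Nneg :=
    Submodule.mem_sup_left (Submodule.mem_sup_left (Submodule.mem_span_singleton_self e))
  have hmemN : ∀ z ∈ Nneg, z ∈ Submodule.span ℂ {e} ⊔ H.toSubmodule ⊔ Nneg := fun z hz =>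
    Submodule.mem_sup_right hz
  have hh0 : h = 0 := by
    have hker := LieAlgebra.IsKilling.ker_restrict_eq_bot_of_isCartanSubalgebra ℂ g H
    have hmem : (⟨h, hh⟩ : H) ∈ LinearMap.ker ((killingForm ℂ g).restrict H) := by
      rw [LinearMap.mem_ker]
      ext z
      obtain ⟨z, hz⟩ := z
      have h1 : killingForm ℂ g (c • f + h + n) z = 0 := hortho z (hmemH z hz)
      have h2 : killingForm ℂ g (c • f) z = 0 :=
        orth_eigen heigf (hHeig z hz) (by norm_num)
      have h3 : killingForm ℂ g n z = 0 := hNorth n hn z 0 (hHeig z hz) hc1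
      have h4 : killingForm ℂ g h z = 0 := by
        have hexp : killingForm ℂ g (c • f + h + n) z =
            killingForm ℂ g (c • f) z + killingForm ℂ g h z + killingForm ℂ g n z := by
          simp [map_add]
        rw [hexp, h2, h3] at h1
        linear_combination h1
      exact h4
    rw [hker] at hmem
    simpa using congrArg Subtype.val hmem
  have hcf0 : c • f = 0 := by
    rcases eq_or_ne f 0 with hf0 | hf0
    · rw [hf0, smul_zero]
    · have hw0 : w ≠ 0 := by
        intro hw0
        apply hf0
        have h5 := hwf
        rw [hw0, zero_lie] at h5
        have h6 : (-(2 : ℂ)) • f = 0 := h5.symm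
        simpa using (smul_eq_zero.mp h6).resolve_left (by norm_num)
      have hkef := kef_ne_zero H hw0 hwe hwf hef hwH
      have h1 : killingForm ℂ g (c • f + h + n) e = 0 := hortho e hmeme
      have h2 : killingForm ℂ g n e = 0 := hNorth n hn e 2 hwe hc2
      have hexp : killingForm ℂ g (c • f + h + n) e =
          killingForm ℂ g (c • f) e + killingForm ℂ g h e + killingForm ℂ g n e := by
        simp [map_add]
      rw [hexp, hh0, h2] at h1
      simp only [map_zero, LinearMap.zero_apply, add_zero] at h1
      have h7 : c * killingForm ℂ g f e = 0 := by
        rw [← smul_eq_mul, ← LinearMap.map_smul₂]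
        exact h1
      rcases mul_eq_zero.mp h7 with hc | hc
      · rw [hc, zero_smul]
      · exact absurd (by rw [kf_symm] at hc; exact hc) hkef
  have hxn : c • f + h + n = n := by rw [hh0, hcf0]; simp
  have hn0 : n = 0 := by
    apply LieAlgebra.IsKilling.killingForm_nondegenerate ℂ g |>.1 n
    intro z
    have hmax : ∀ μ : ℂ, T.maxGenEigenspace μ = T.eigenspace μ := fun μ =>
      (LieAlgebra.IsKilling.isSemisimple_ad_of_mem_isCartanSubalgebra
        hwH).isFinitelySemisimple.maxGenEigenspace_eq_eigenspace μ
    have htop : (⨆ μ : ℂ, T.eigenspace μ) = ⊤ := by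
      have h1 := Module.End.iSup_maxGenEigenspace_eq_top T
      simp_rw [hmax] at h1
      exact h1
    have hz : z ∈ ⨆ μ : ℂ, T.eigenspace μ := by rw [htop]; trivial
    have hle : (⨆ μ : ℂ, T.eigenspace μ) ≤ LinearMap.ker (killingForm ℂ g n) := by
      refine iSup_le fun μ v hv => ?_
      have hveig : ⁅w, v⁆ = μ • v := by
        simpa [hT, LieAlgebra.ad_apply] using Module.End.mem_eigenspace_iff.mp hv
      rw [LinearMap.mem_ker]
      by_cases hcase : ∃ k : ℕ, μ = -(2 * ((k : ℂ) + 1))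
      · obtain ⟨k, rfl⟩ := hcase
        have hvN : v ∈ Nneg := le_iSup (fun k : ℕ => T.eigenspace (-(2 * ((k : ℂ) + 1)))) k hv
        have := hortho v (hmemN v hvN)
        rwa [hxn] at this
      · push_neg at hcase
        refine hNorth n hn v μ hveig fun k hcon => ?_
        exact hcase k (by linear_combination hcon)
    exact hle hz
  rw [hxn, hn0]

/-- Restriction of functions on `g` to a subspace `W`, as an algebra homomorphism. -/
def restrictHom (W : Submodule ℂ g) : (g → ℂ) →ₐ[ℂ] (W → ℂ) where
  toFun f := fun v => f v
  map_one' := rfl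
  map_mul' _ _ := rfl
  map_zero' := rfl
  map_add' _ _ := rfl
  commutes' _ := rfl

/-- Let `q = ℂf + b` and `q_- = ℂe + b_-`.  Then `g = q ⊕ q_-^⊥` (Killing
orthocomplement), and restriction of polynomial functions `S(q) → A(q_-)` (polynomials in
the linear functionals `(y, ·)`, `y ∈ q`, restricted to `q_-`) is an algebra isomorphism
onto the algebra `A(q_-)` of polynomial functions on `q_-`. -/
theorem killing_decomposition_and_restriction_isomorphism
    (ℓ : ℕ) (hrank : ℓ = LieAlgebra.rank ℂ g)
    (H : LieSubalgebra ℂ g) (hH : H.IsCartanSubalgebra)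
    (w e f : g)
    (hwe : ⁅w, e⁆ = (2 : ℂ) • e) (hwf : ⁅w, f⁆ = -(2 : ℂ) • f) (hef : ⁅e, f⁆ = w)
    (hwH : w ∈ H)
    (hH0 : H.toSubmodule = (LieAlgebra.ad ℂ g w : Module.End ℂ g).eigenspace 0)
    (Npos Nneg : Submodule ℂ g)
    (hNpos : Npos = ⨆ k : ℕ,
      (LieAlgebra.ad ℂ g w : Module.End ℂ g).eigenspace (2 * ((k : ℂ) + 1)))
    (hNneg : Nneg = ⨆ k : ℕ,
      (LieAlgebra.ad ℂ g w : Module.End ℂ g).eigenspace (-(2 * ((k : ℂ) + 1))))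
    -- `q = ℂf + b` and `q_- = ℂe + b_-`
    (Q Qneg : Submodule ℂ g)
    (hQ : Q = Submodule.span ℂ {f} ⊔ H.toSubmodule ⊔ Npos)
    (hQneg : Qneg = Submodule.span ℂ {e} ⊔ H.toSubmodule ⊔ Nneg)
    -- `S(q)`: the algebra of polynomial functions generated by `(y, ·)`, `y ∈ q`
    (SQ : Subalgebra ℂ (g → ℂ))
    (hSQ : SQ = Algebra.adjoin ℂ
      {p : g → ℂ | ∃ y ∈ Q, p = fun x => killingForm ℂ g y x})
    -- `A(q_-)`: the algebra of polynomial functions on the subspace `q_-`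
    (AQ : Subalgebra ℂ (Qneg → ℂ))
    (hAQ : AQ = Algebra.adjoin ℂ
      {p : Qneg → ℂ | ∃ y : g, p = fun x : Qneg => killingForm ℂ g y (x : g)}) :
    IsCompl Q ((killingForm ℂ g).orthogonal Qneg) ∧
    (∀ p₁ ∈ SQ, ∀ p₂ ∈ SQ, restrictHom Qneg p₁ = restrictHom Qneg p₂ → p₁ = p₂) ∧
    (∀ φ : Qneg → ℂ, φ ∈ AQ ↔ ∃ p ∈ SQ, restrictHom Qneg p = φ) := by
  haveI := hH
  have hrefl : (killingForm ℂ g).IsRefl := (LieModule.traceForm_isSymm ℂ g g).isRefl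
  have hnd := LieAlgebra.IsKilling.killingForm_nondegenerate ℂ g
  -- data for the mirror triple (-w, f, e)
  have hwe' : ⁅-w, f⁆ = (2 : ℂ) • f := by
    rw [neg_lie, hwf, neg_smul, neg_neg]
  have hwf' : ⁅-w, e⁆ = -(2 : ℂ) • e := by
    rw [neg_lie, hwe, neg_smul]
  have hef' : ⁅f, e⁆ = -w := by rw [← lie_skew, hef]
  have hwH' : -w ∈ H := neg_mem hwH
  have hadneg : (LieAlgebra.ad ℂ g (-w) : Module.End ℂ g)
      = -(LieAlgebra.ad ℂ g w : Module.End ℂ g) := by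
    simp [map_neg]
  have hH0' : H.toSubmodule = (LieAlgebra.ad ℂ g (-w) : Module.End ℂ g).eigenspace 0 := by
    rw [hadneg, eig_neg, neg_zero, hH0]
  have hNneg' : (⨆ k : ℕ,
      (LieAlgebra.ad ℂ g (-w) : Module.End ℂ g).eigenspace (2 * ((k : ℂ) + 1))) = Nneg := by
    rw [hNneg]
    exact iSup_congr fun k => by rw [hadneg, eig_neg]
  have hNpos' : (⨆ k : ℕ,
      (LieAlgebra.ad ℂ g (-w) : Module.End ℂ g).eigenspace (-(2 * ((k : ℂ) + 1)))) = Npos := by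
    rw [hNpos]
    exact iSup_congr fun k => by rw [hadneg, eig_neg, neg_neg]
  -- the two kernel statements
  have hkerQ : ∀ x ∈ Q, (∀ y ∈ Qneg, killingForm ℂ g x y = 0) → x = 0 := by
    intro x hx hxy
    rw [hQ, hNpos] at hx
    exact aux_ker H w e f hwe hwf hef hwH hH0 hx
      (fun y hy => hxy y (by rw [hQneg, hNneg]; exact hy))
  have hkerQneg : ∀ x ∈ Qneg, (∀ y ∈ Q, killingForm ℂ g x y = 0) → x = 0 := by
    intro x hx hxy
    rw [hQneg, ← hNneg'] at hx
    exact aux_ker H (-w) f e hwe' hwf' hef' hwH' hH0' hx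
      (fun y hy => hxy y (by rw [hQ, ← hNpos']; exact hy))
  -- disjointness
  have hdisj1 : Disjoint Q ((killingForm ℂ g).orthogonal Qneg) := by
    rw [Submodule.disjoint_def]
    intro x hxQ hxO
    refine hkerQ x hxQ fun y hy => ?_
    rw [kf_symm]
    exact (LinearMap.BilinForm.mem_orthogonal_iff.mp hxO) y hy
  have hdisj2 : Disjoint Qneg ((killingForm ℂ g).orthogonal Q) := by
    rw [Submodule.disjoint_def]
    intro x hxQ hxO
    refine hkerQneg x hxQ fun y hy => ?_
    rw [kf_symm]
    exact (LinearMap.BilinForm.mem_orthogonal_iff.mp hxO) y hy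
  -- dimension bookkeeping
  have horthQ : Module.finrank ℂ ((killingForm ℂ g).orthogonal Q)
      = Module.finrank ℂ g - Module.finrank ℂ Q :=
    LinearMap.BilinForm.finrank_orthogonal hnd Q
  have horthQneg : Module.finrank ℂ ((killingForm ℂ g).orthogonal Qneg)
      = Module.finrank ℂ g - Module.finrank ℂ Qneg :=
    LinearMap.BilinForm.finrank_orthogonal hnd Qneg
  have hQle : Module.finrank ℂ Q ≤ Module.finrank ℂ g := Q.finrank_le
  have hQnegle : Module.finrank ℂ Qneg ≤ Module.finrank ℂ g := Qneg.finrank_le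
  have hsum1 : Module.finrank ℂ ↥(Q ⊔ (killingForm ℂ g).orthogonal Qneg)
      + Module.finrank ℂ ↥(Q ⊓ (killingForm ℂ g).orthogonal Qneg)
      = Module.finrank ℂ Q + Module.finrank ℂ ((killingForm ℂ g).orthogonal Qneg) :=
    Submodule.finrank_sup_add_finrank_inf_eq _ _
  have hsum2 : Module.finrank ℂ ↥(Qneg ⊔ (killingForm ℂ g).orthogonal Q)
      + Module.finrank ℂ ↥(Qneg ⊓ (killingForm ℂ g).orthogonal Q)
      = Module.finrank ℂ Qneg + Module.finrank ℂ ((killingForm ℂ g).orthogonal Q) :=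
    Submodule.finrank_sup_add_finrank_inf_eq _ _
  rw [hdisj1.eq_bot, finrank_bot, add_zero, horthQneg] at hsum1
  rw [hdisj2.eq_bot, finrank_bot, add_zero, horthQ] at hsum2
  have hle1 : Module.finrank ℂ ↥(Q ⊔ (killingForm ℂ g).orthogonal Qneg)
      ≤ Module.finrank ℂ g := Submodule.finrank_le _
  have hle2 : Module.finrank ℂ ↥(Qneg ⊔ (killingForm ℂ g).orthogonal Q)
      ≤ Module.finrank ℂ g := Submodule.finrank_le _
  have heq : Module.finrank ℂ Q = Module.finrank ℂ Qneg := by omega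
  have hcod1 : Codisjoint Q ((killingForm ℂ g).orthogonal Qneg) := by
    rw [codisjoint_iff]
    apply Submodule.eq_top_of_finrank_eq
    omega
  have hcod2 : Codisjoint Qneg ((killingForm ℂ g).orthogonal Q) := by
    rw [codisjoint_iff]
    apply Submodule.eq_top_of_finrank_eq
    omega
  have hcompl1 : IsCompl Q ((killingForm ℂ g).orthogonal Qneg) := ⟨hdisj1, hcod1⟩
  have hcompl2 : IsCompl Qneg ((killingForm ℂ g).orthogonal Q) := ⟨hdisj2, hcod2⟩
  refine ⟨hcompl1, ?_, ?_⟩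
  · -- injectivity of restriction on SQ
    have hkey : ∀ p ∈ SQ, ∀ z x : g,
        (∀ y ∈ Q, killingForm ℂ g y z = killingForm ℂ g y x) → p z = p x := by
      intro p hp
      rw [hSQ] at hp
      induction hp using Algebra.adjoin_induction with
      | mem q hq =>
        obtain ⟨y, hyQ, rfl⟩ := hq
        intro z x hzx
        exact hzx y hyQ
      | algebraMap c => intro z x _; rfl
      | add p1 p2 hp1 hp2 ih1 ih2 =>
        intro z x hzx
        simp only [Pi.add_apply, ih1 z x hzx, ih2 z x hzx]
      | mul p1 p2 hp1 hp2 ih1 ih2 =>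
        intro z x hzx
        simp only [Pi.mul_apply, ih1 z x hzx, ih2 z x hzx]
    intro p₁ hp₁ p₂ hp₂ hres
    funext z
    have hz : z ∈ Qneg ⊔ (killingForm ℂ g).orthogonal Q := by
      rw [codisjoint_iff.mp hcod2]; trivial
    obtain ⟨v, hv, o, ho, rfl⟩ := Submodule.mem_sup.mp hz
    have hagree : ∀ y ∈ Q, killingForm ℂ g y (v + o) = killingForm ℂ g y v := by
      intro y hy
      have ho' : killingForm ℂ g y o = 0 :=
        (LinearMap.BilinForm.mem_orthogonal_iff.mp ho) y hy
      rw [map_add, ho', add_zero]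
    have h1 : p₁ (v + o) = p₁ v := hkey p₁ hp₁ (v + o) v hagree
    have h2 : p₂ (v + o) = p₂ v := hkey p₂ hp₂ (v + o) v hagree
    have h3 : p₁ v = p₂ v := congrFun hres ⟨v, hv⟩
    rw [h1, h2, h3]
  · -- image characterization
    intro φ
    constructor
    · intro hφ
      rw [hAQ] at hφ
      induction hφ using Algebra.adjoin_induction with
      | mem q hq =>
        obtain ⟨y, rfl⟩ := hq
        have hy : y ∈ Q ⊔ (killingForm ℂ g).orthogonal Qneg := by
          rw [codisjoint_iff.mp hcod1]; trivial
        obtain ⟨a, ha, b, hb, rfl⟩ := Submodule.mem_sup.mp hy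
        refine ⟨fun x => killingForm ℂ g a x, ?_, ?_⟩
        · rw [hSQ]; exact Algebra.subset_adjoin ⟨a, ha, rfl⟩
        · funext x
          show killingForm ℂ g a (x : g) = killingForm ℂ g (a + b) (x : g)
          have hb' : killingForm ℂ g b (x : g) = 0 := by
            rw [kf_symm]
            exact (LinearMap.BilinForm.mem_orthogonal_iff.mp hb) (x : g) x.2
          rw [map_add, LinearMap.add_apply, hb', add_zero]
      | algebraMap c =>
        exact ⟨algebraMap ℂ _ c, by rw [hSQ]; exact Subalgebra.algebraMap_mem _ c,
          by rw [AlgHom.commutes]⟩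
      | add p1 p2 hp1 hp2 ih1 ih2 =>
        obtain ⟨q1, hq1, rfl⟩ := ih1
        obtain ⟨q2, hq2, rfl⟩ := ih2
        exact ⟨q1 + q2, add_mem hq1 hq2, map_add _ _ _⟩
      | mul p1 p2 hp1 hp2 ih1 ih2 =>
        obtain ⟨q1, hq1, rfl⟩ := ih1
        obtain ⟨q2, hq2, rfl⟩ := ih2
        exact ⟨q1 * q2, mul_mem hq1 hq2, map_mul _ _ _⟩
    · rintro ⟨p, hp, rfl⟩
      rw [hSQ] at hp
      rw [hAQ]
      induction hp using Algebra.adjoin_induction with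
      | mem q hq =>
        obtain ⟨y, hyQ, rfl⟩ := hq
        exact Algebra.subset_adjoin ⟨y, rfl⟩
      | algebraMap c =>
        rw [AlgHom.commutes]
        exact Subalgebra.algebraMap_mem _ c
      | add p1 p2 hp1 hp2 ih1 ih2 =>
        rw [map_add]
        exact add_mem ih1 ih2
      | mul p1 p2 hp1 hp2 ih1 ih2 =>
        rw [map_mul]
        exact mul_mem ih1 ih2

end
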